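/- For any graph G on n vertices, the matching number satisfies β_1(G) ≤ m_G[2,n]. -/

import Mathlib

open scoped Classical

/-- The `i`-th Laplacian eigenvalue of `G` (in the unsorted indexing given by
the spectral theorem applied to the Laplacian matrix). -/
noncomputable def lapEig {V : Type*} [Fintype V] [DecidableEq V] (G : SimpleGraph V) : V → ℝ :=
  (G.posSemidef_lapMatrix (R := ℝ)).isHermitian.eigenvalues

/-- The number of Laplacian eigenvalues of `G` (with multiplicity) satisfying `P`. -/
noncomputable def mCount {V : Type*} [Fintype V] [DecidableEq V] (G : SimpleGraph V)
    (P : ℝ → Prop) : ℕ :=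
  (Finset.univ.filter fun i => P (lapEig G i)).card

/-- `S` is a dominating set of `G`. -/
def IsDomSet {V : Type*} (G : SimpleGraph V) (S : Finset V) : Prop :=
  ∀ v ∉ S, ∃ u ∈ S, G.Adj u v

/-- The domination number of `G`. -/
noncomputable def domNum {V : Type*} [Fintype V] (G : SimpleGraph V) : ℕ :=
  sInf {k | ∃ S : Finset V, IsDomSet G S ∧ S.card = k}
/-- The matching number of $G$: the maximum number of pairwise disjoint edges. -/
noncomputable def matchNum {V : Type*} [Fintype V] [DecidableEq V] (G : SimpleGraph V) : ℕ :=
  sSup {k | ∃ M : Finset (Sym2 V), ↑M ⊆ G.edgeSet ∧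
    (∀ e ∈ M, ∀ f ∈ M, e ≠ f → ∀ v : V, ¬(v ∈ e ∧ v ∈ f)) ∧ M.card = k}

open Matrix Finset

section Abstract
variable {n : ℕ} {A : Matrix (Fin n) (Fin n) ℝ} (hA : A.IsHermitian)

lemma dotProduct_finsum {ι : Type*} (u : Fin n → ℝ) (s : Finset ι) (f : ι → Fin n → ℝ) :
    dotProduct u (∑ i ∈ s, f i) = ∑ i ∈ s, dotProduct u (f i) := by
  simp only [dotProduct, Finset.sum_apply, Finset.mul_sum]
  rw [Finset.sum_comm]

lemma finsum_dotProduct {ι : Type*} (u : Fin n → ℝ) (s : Finset ι) (f : ι → Fin n → ℝ) :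
    dotProduct (∑ i ∈ s, f i) u = ∑ i ∈ s, dotProduct (f i) u := by
  simp only [dotProduct, Finset.sum_apply, Finset.sum_mul]
  rw [Finset.sum_comm]

noncomputable def evec (i : Fin n) : Fin n → ℝ := ⇑(hA.eigenvectorBasis i)

lemma evec_dot (i j : Fin n) :
    dotProduct (evec hA i) (evec hA j) = if i = j then 1 else 0 := by
  have h := hA.eigenvectorBasis.orthonormal
  rw [orthonormal_iff_ite] at h
  have hh := h i j
  rw [← hh, EuclideanSpace.inner_eq_star_dotProduct]
  simp [dotProduct, mul_comm, evec]

lemma dot_expand (d e : Fin n → ℝ) :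
    dotProduct (∑ i, d i • evec hA i) (∑ j, e j • evec hA j) = ∑ i, d i * e i := by
  rw [finsum_dotProduct]
  refine Finset.sum_congr rfl fun i _ => ?_
  rw [smul_dotProduct, dotProduct_finsum]
  simp only [dotProduct_smul, evec_dot, smul_eq_mul]
  rw [Finset.sum_eq_single i (fun j _ hj => by simp [Ne.symm hj]) (by simp)]
  simp [mul_comm]

lemma evec_li : LinearIndependent ℝ (evec hA) := by
  rw [linearIndependent_iff']
  intro s g hsum i hi
  have h := congrArg (fun x => dotProduct (evec hA i) x) hsum
  simp only [dotProduct_zero] at h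
  rw [dotProduct_finsum] at h
  simp only [dotProduct_smul, evec_dot, smul_eq_mul] at h
  rwa [Finset.sum_eq_single i (fun j _ hj => by simp [if_neg (Ne.symm hj).symm, hj.symm])
    (fun h => absurd hi h), if_pos rfl, mul_one] at h

noncomputable def evecBasis : Module.Basis (Fin n) ℝ (Fin n → ℝ) :=
  Module.Basis.mk (evec_li hA)
    (le_of_eq ((evec_li hA).span_eq_top_of_card_eq_finrank' (by simp)).symm)

lemma evecBasis_apply (i : Fin n) : evecBasis hA i = evec hA i := by
  simp [evecBasis, Module.Basis.mk_apply]

lemma x_expand (x : Fin n → ℝ) :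
    x = ∑ i, ((evecBasis hA).repr x i) • evec hA i := by
  conv_lhs => rw [← (evecBasis hA).sum_repr x]
  exact Finset.sum_congr rfl fun i _ => by rw [evecBasis_apply]

lemma dot_self_eq (x : Fin n → ℝ) :
    dotProduct x x = ∑ i, ((evecBasis hA).repr x i)^2 := by
  have h := dot_expand hA (fun i => (evecBasis hA).repr x i) (fun i => (evecBasis hA).repr x i)
  rw [← x_expand hA x] at h
  simpa [sq] using h

lemma dot_mulVec_eq (x : Fin n → ℝ) :
    dotProduct x (A *ᵥ x) = ∑ i, hA.eigenvalues i * ((evecBasis hA).repr x i)^2 := by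
  have hAx : A *ᵥ x = ∑ i, (((evecBasis hA).repr x i) * hA.eigenvalues i) • evec hA i := by
    conv_lhs => rw [x_expand hA x]
    rw [show A *ᵥ (∑ i, ((evecBasis hA).repr x i) • evec hA i)
        = mulVecLin A (∑ i, ((evecBasis hA).repr x i) • evec hA i) from rfl,
      map_sum]
    refine Finset.sum_congr rfl fun i _ => ?_
    rw [_root_.map_smul, mulVecLin_apply, evec, hA.mulVec_eigenvectorBasis, smul_smul, mul_comm]
  rw [hAx]
  have h := dot_expand hA (fun i => (evecBasis hA).repr x i)
    (fun i => ((evecBasis hA).repr x i) * hA.eigenvalues i)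
  rw [← x_expand hA x] at h
  rw [h]
  exact Finset.sum_congr rfl fun i _ => by ring

lemma count_eigs {ι : Type*} [Fintype ι] (c : ℝ) (T : (ι → ℝ) →ₗ[ℝ] (Fin n → ℝ))
    (hT : Function.Injective T)
    (hR : ∀ y, c * dotProduct (T y) (T y) ≤ dotProduct (T y) (A *ᵥ T y)) :
    Fintype.card ι ≤ (Finset.univ.filter fun i => c ≤ hA.eigenvalues i).card := by
  classical
  set F := (Finset.univ.filter fun i => c ≤ hA.eigenvalues i) with hF
  let φ : (Fin n → ℝ) →ₗ[ℝ] ({j // j ∈ F} → ℝ) :=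
    { toFun := fun x j => (evecBasis hA).repr x j.1
      map_add' := by intro x y; ext j; simp
      map_smul' := by intro c x; ext j; simp }
  have hinj : Function.Injective (φ.comp T) := by
    rw [← LinearMap.ker_eq_bot, LinearMap.ker_eq_bot']
    intro y hy
    by_contra hy0
    have hx0 : T y ≠ 0 := fun h => hy0 (hT (h.trans (map_zero T).symm))
    set x := T y with hx
    set d := fun i => (evecBasis hA).repr x i with hd
    have hdF : ∀ j : Fin n, c ≤ hA.eigenvalues j → d j = 0 := by
      intro j hj
      have h2 : φ.comp T y = 0 := hy
      exact congrFun (show ((φ.comp T) y : {j // j ∈ F} → ℝ) = 0 from h2) ⟨j, by simp [hF, hj]⟩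
    have hd0 : ∃ i, d i ≠ 0 := by
      by_contra h
      push_neg at h
      apply hx0
      have h3 : ((evecBasis hA).repr x) = 0 := by ext i; exact h i
      simpa using (LinearEquiv.map_eq_zero_iff (evecBasis hA).repr).mp h3
    obtain ⟨i0, hi0⟩ := hd0
    have hlt : ∑ i, hA.eigenvalues i * (d i)^2 < c * ∑ i, (d i)^2 := by
      rw [Finset.mul_sum]
      refine Finset.sum_lt_sum (fun i _ => ?_) ⟨i0, Finset.mem_univ i0, ?_⟩
      · by_cases h : d i = 0
        · simp [h]
        · have hlt' : hA.eigenvalues i < c := lt_of_not_ge fun hc => h (hdF i hc)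
          nlinarith [sq_nonneg (d i)]
      · have hlt' : hA.eigenvalues i0 < c := lt_of_not_ge fun hc => hi0 (hdF i0 hc)
        have : 0 < (d i0)^2 := by positivity
        nlinarith
    have h1 := hR y
    rw [← hx, dot_self_eq hA x, dot_mulVec_eq hA x] at h1
    exact absurd h1 (not_le.mpr hlt)
  have hle := LinearMap.finrank_le_finrank_of_injective hinj
  simpa [Module.finrank_fintype_fun_eq_card] using hle
end Abstract
section Graph
variable {n : ℕ}

noncomputable def eA (e : Sym2 (Fin n)) : Fin n := e.out.1
noncomputable def eB (e : Sym2 (Fin n)) : Fin n := e.out.2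

lemma eA_mem (e : Sym2 (Fin n)) : eA e ∈ e := Sym2.out_fst_mem e
lemma eB_mem (e : Sym2 (Fin n)) : eB e ∈ e := Sym2.out_snd_mem e

lemma e_eq (e : Sym2 (Fin n)) : e = s(eA e, eB e) := by
  show e = Sym2.mk (eA e) (eB e)
  rw [eA, eB]
  conv_lhs => rw [← e.out_eq]

lemma adj_of_mem_edgeSet (G : SimpleGraph (Fin n)) {e : Sym2 (Fin n)} (he : e ∈ G.edgeSet) :
    G.Adj (eA e) (eB e) := by
  rw [e_eq e] at he
  exact (SimpleGraph.mem_edgeSet G).mp he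
end Graph

section Matching
variable {n : ℕ}

noncomputable def wv (e : Sym2 (Fin n)) : Fin n → ℝ :=
  Pi.single (eA e) 1 - Pi.single (eB e) 1

lemma wv_dot (e : Sym2 (Fin n)) (u : Fin n → ℝ) :
    dotProduct (wv e) u = u (eA e) - u (eB e) := by
  simp [wv, sub_dotProduct, single_dotProduct]

noncomputable def TM (M : Finset (Sym2 (Fin n))) : ({e // e ∈ M} → ℝ) →ₗ[ℝ] (Fin n → ℝ) where
  toFun y := ∑ e : {e // e ∈ M}, y e • wv e.1
  map_add' x y := by simp [add_smul, Finset.sum_add_distrib]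
  map_smul' c y := by
    simp only [Pi.smul_apply, smul_eq_mul, RingHom.id_apply, Finset.smul_sum, ← smul_smul]

variable (G : SimpleGraph (Fin n)) (M : Finset (Sym2 (Fin n)))
  (hMe : ↑M ⊆ G.edgeSet)
  (hdisj : ∀ e ∈ M, ∀ f ∈ M, e ≠ f → ∀ v : Fin n, ¬(v ∈ e ∧ v ∈ f))

section
include hMe hdisj

lemma wv_apply_mem {e : Sym2 (Fin n)} (he : e ∈ M) {f : Sym2 (Fin n)} (hf : f ∈ M)
    (hne : f ≠ e) (v : Fin n) (hv : v ∈ e) : wv f v = 0 := by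
  have hA : eA f ≠ v := fun h => hdisj e he f hf hne.symm v ⟨hv, h ▸ eA_mem f⟩
  have hB : eB f ≠ v := fun h => hdisj e he f hf hne.symm v ⟨hv, h ▸ eB_mem f⟩
  simp [wv, Pi.single_apply, (Ne.symm hA), (Ne.symm hB)]

lemma TM_apply_eA (y : {e // e ∈ M} → ℝ) (e : {e // e ∈ M}) :
    (TM M y) (eA e.1) = y e := by
  show (∑ f : {e // e ∈ M}, y f • wv f.1) (eA e.1) = y e
  rw [Finset.sum_apply]
  rw [Finset.sum_eq_single e (fun f _ hf => by
    rw [Pi.smul_apply, wv_apply_mem G M hMe hdisj e.2 f.2 (fun h => hf (Subtype.ext h)) _ (eA_mem e.1)]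
    simp) (by simp)]
  have hne : eA e.1 ≠ eB e.1 := (adj_of_mem_edgeSet G (hMe e.2)).ne
  simp [wv, Pi.single_apply, hne]

lemma TM_apply_eB (y : {e // e ∈ M} → ℝ) (e : {e // e ∈ M}) :
    (TM M y) (eB e.1) = -y e := by
  show (∑ f : {e // e ∈ M}, y f • wv f.1) (eB e.1) = -y e
  rw [Finset.sum_apply]
  rw [Finset.sum_eq_single e (fun f _ hf => by
    rw [Pi.smul_apply, wv_apply_mem G M hMe hdisj e.2 f.2 (fun h => hf (Subtype.ext h)) _ (eB_mem e.1)]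
    simp) (by simp)]
  have hne : eA e.1 ≠ eB e.1 := (adj_of_mem_edgeSet G (hMe e.2)).ne
  simp [wv, Pi.single_apply, hne.symm]

lemma TM_dot_self (y : {e // e ∈ M} → ℝ) :
    dotProduct (TM M y) (TM M y) = ∑ e : {e // e ∈ M}, 2 * (y e)^2 := by
  have hT : (TM M y : Fin n → ℝ) = ∑ e : {e // e ∈ M}, y e • wv e.1 := rfl
  conv_lhs => rw [hT]
  rw [finsum_dotProduct]
  refine Finset.sum_congr rfl fun e _ => ?_
  rw [smul_dotProduct, wv_dot, ← hT, TM_apply_eA G M hMe hdisj, TM_apply_eB G M hMe hdisj,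
    smul_eq_mul]
  ring

lemma TM_inj : Function.Injective (TM M) := by
  rw [← LinearMap.ker_eq_bot, LinearMap.ker_eq_bot']
  intro y hy
  ext e
  have := TM_apply_eA G M hMe hdisj y e
  rw [hy] at this
  simpa using this.symm

lemma TM_rayleigh (y : {e // e ∈ M} → ℝ) :
    2 * dotProduct (TM M y) (TM M y) ≤ dotProduct (TM M y) (G.lapMatrix ℝ *ᵥ TM M y) := by
  set x : Fin n → ℝ := TM M y with hx
  have hform : dotProduct x (G.lapMatrix ℝ *ᵥ x) =
      (∑ i : Fin n, ∑ j : Fin n, if G.Adj i j then (x i - x j)^2 else 0) / 2 := by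
    rw [← Matrix.toLinearMap₂'_apply', SimpleGraph.lapMatrix_toLinearMap₂']
  set P : Finset (Fin n × Fin n) :=
    M.biUnion (fun e => ({(eA e, eB e), (eB e, eA e)} : Finset (Fin n × Fin n))) with hP
  have hsub : ∑ p ∈ P, (if G.Adj p.1 p.2 then (x p.1 - x p.2)^2 else 0) ≤
      ∑ i : Fin n, ∑ j : Fin n, if G.Adj i j then (x i - x j)^2 else 0 := by
    rw [← Finset.sum_product']
    refine Finset.sum_le_sum_of_subset_of_nonneg ?_ (fun p _ _ => by positivity)
    intro p _; simp
  have hdisjP : ∀ e ∈ M, ∀ f ∈ M, e ≠ f →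
      Disjoint ({(eA e, eB e), (eB e, eA e)} : Finset (Fin n × Fin n))
        {(eA f, eB f), (eB f, eA f)} := by
    intro e he f hf hef
    have hv : ∀ u : Fin n, u ∈ e → u ∈ f → False := fun u hu hf' => hdisj e he f hf hef u ⟨hu, hf'⟩
    refine Finset.disjoint_left.mpr ?_
    intro p hp hq
    simp only [Finset.mem_insert, Finset.mem_singleton] at hp hq
    rcases hp with h1 | h1 <;> rcases hq with h2 | h2 <;> subst h1 <;> injection h2 with ha hb
    · exact hv _ (eA_mem e) (by rw [ha]; exact eA_mem f)
    · exact hv _ (eA_mem e) (by rw [ha]; exact eB_mem f)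
    · exact hv _ (eB_mem e) (by rw [ha]; exact eA_mem f)
    · exact hv _ (eB_mem e) (by rw [ha]; exact eB_mem f)
  have hPsum : ∑ p ∈ P, (if G.Adj p.1 p.2 then (x p.1 - x p.2)^2 else 0) =
      ∑ e ∈ M, ∑ p ∈ ({(eA e, eB e), (eB e, eA e)} : Finset (Fin n × Fin n)),
        (if G.Adj p.1 p.2 then (x p.1 - x p.2)^2 else 0) := by
    rw [hP, Finset.sum_biUnion]
    intro e he f hf hef
    exact hdisjP e he f hf hef
  have hinner : ∀ e ∈ M, ∑ p ∈ ({(eA e, eB e), (eB e, eA e)} : Finset (Fin n × Fin n)),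
      (if G.Adj p.1 p.2 then (x p.1 - x p.2)^2 else 0) = 2 * (x (eA e) - x (eB e))^2 := by
    intro e he
    have hadj := adj_of_mem_edgeSet G (hMe he)
    have hne : ((eA e, eB e) : Fin n × Fin n) ≠ (eB e, eA e) := by
      intro h
      exact hadj.ne (congrArg Prod.fst h)
    rw [Finset.sum_pair hne]
    simp only [if_pos hadj, if_pos hadj.symm]
    ring
  have hval : ∀ e, ∀ he : e ∈ M, (x (eA e) - x (eB e))^2 = 4 * (y ⟨e, he⟩)^2 := by
    intro e he
    have h1 := TM_apply_eA G M hMe hdisj y ⟨e, he⟩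
    have h2 := TM_apply_eB G M hMe hdisj y ⟨e, he⟩
    rw [← hx] at h1 h2
    rw [h1, h2]
    ring
  have hsum2 : ∑ e ∈ M, ∑ p ∈ ({(eA e, eB e), (eB e, eA e)} : Finset (Fin n × Fin n)),
      (if G.Adj p.1 p.2 then (x p.1 - x p.2)^2 else 0)
      = ∑ e : {e // e ∈ M}, 8 * (y e)^2 := by
    conv_rhs => rw [Finset.univ_eq_attach]
    rw [← Finset.sum_attach M (fun e => ∑ p ∈ ({(eA e, eB e), (eB e, eA e)} : Finset (Fin n × Fin n)),
        (if G.Adj p.1 p.2 then (x p.1 - x p.2)^2 else 0))]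
    refine Finset.sum_congr rfl fun e _ => ?_
    rw [hinner e.1 e.2, hval e.1 e.2]
    ring
  rw [hform, TM_dot_self G M hMe hdisj]
  have hle := hsub
  rw [hPsum, hsum2] at hle
  have h8 : (∑ e : {e // e ∈ M}, 8 * (y e)^2) = 8 * ∑ e : {e // e ∈ M}, (y e)^2 := by
    rw [Finset.mul_sum]
  have h4 : (∑ e : {e // e ∈ M}, 2 * (y e)^2) = 2 * ∑ e : {e // e ∈ M}, (y e)^2 := by
    rw [Finset.mul_sum]
  rw [h8] at hle
  rw [h4]
  linarith
end
end Matching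

lemma lapEig_le_card {n : ℕ} (G : SimpleGraph (Fin n)) (i : Fin n) : lapEig G i ≤ (n : ℝ) := by
  set hH := (G.posSemidef_lapMatrix (R := ℝ)).isHermitian with hHdef
  set v : Fin n → ℝ := evec hH i with hvdef
  have hv1 : dotProduct v v = 1 := by simpa using evec_dot hH i i
  have hLv : G.lapMatrix ℝ *ᵥ v = hH.eigenvalues i • v := hH.mulVec_eigenvectorBasis i
  have h1 : dotProduct v (G.lapMatrix ℝ *ᵥ v) = lapEig G i := by
    rw [hLv, dotProduct_smul, smul_eq_mul, hv1, mul_one]; rfl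
  have h2 : dotProduct v (G.lapMatrix ℝ *ᵥ v) =
      (∑ a : Fin n, ∑ b : Fin n, if G.Adj a b then (v a - v b)^2 else 0) / 2 := by
    rw [← Matrix.toLinearMap₂'_apply', SimpleGraph.lapMatrix_toLinearMap₂']
  have hsq : ∑ a : Fin n, (v a)^2 = 1 := by
    rw [← hv1]; simp [dotProduct, sq]
  have hbound : (∑ a : Fin n, ∑ b : Fin n, if G.Adj a b then (v a - v b)^2 else 0)
      ≤ ∑ a : Fin n, ∑ b : Fin n, (v a - v b)^2 := by
    refine Finset.sum_le_sum fun a _ => Finset.sum_le_sum fun b _ => ?_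
    split
    · exact le_refl _
    · positivity
  have hexp : ∑ a : Fin n, ∑ b : Fin n, (v a - v b)^2
      = 2 * n - 2 * (∑ a, v a)^2 := by
    have hrow : ∀ a : Fin n, ∑ b : Fin n, (v a - v b)^2
        = n * (v a)^2 + 1 - 2 * v a * ∑ b, v b := by
      intro a
      have hterm : ∀ b : Fin n, (v a - v b)^2 = ((v a)^2 - 2 * v a * v b) + (v b)^2 :=
        fun b => by ring
      rw [Finset.sum_congr rfl fun b _ => hterm b, Finset.sum_add_distrib,
        Finset.sum_sub_distrib, hsq, Finset.sum_const, Finset.card_univ, Fintype.card_fin,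
        ← Finset.mul_sum]
      push_cast
      ring
    rw [Finset.sum_congr rfl fun a _ => hrow a, Finset.sum_sub_distrib, Finset.sum_add_distrib,
      ← Finset.mul_sum, hsq, Finset.sum_const, Finset.card_univ, Fintype.card_fin]
    have h3 : ∑ a : Fin n, 2 * v a * ∑ b : Fin n, v b = 2 * (∑ a : Fin n, v a)^2 := by
      have h4 : ∀ a : Fin n, 2 * v a * ∑ b : Fin n, v b = v a * (2 * ∑ b : Fin n, v b) :=
        fun a => by ring
      rw [Finset.sum_congr rfl fun a _ => h4 a, ← Finset.sum_mul]
      ring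
    rw [h3]
    push_cast
    ring
  have hS : (0:ℝ) ≤ (∑ a, v a)^2 := sq_nonneg _
  have := h1 ▸ h2
  rw [this]
  have : (∑ a : Fin n, ∑ b : Fin n, if G.Adj a b then (v a - v b)^2 else 0) ≤ 2 * n := by
    calc _ ≤ ∑ a : Fin n, ∑ b : Fin n, (v a - v b)^2 := hbound
    _ = 2 * n - 2 * (∑ a, v a)^2 := hexp
    _ ≤ 2 * n := by linarith
  linarith

/-- For any graph $G$ on $n$ vertices, $\beta_1(G) \le m_G[2,n]$. -/
theorem matchNum_le_mCount_Icc_two_n {n : ℕ} (G : SimpleGraph (Fin n)) :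
    matchNum G ≤ mCount G (fun x => 2 ≤ x ∧ x ≤ (n : ℝ)) := by
  have h0 : (0:ℕ) ∈ {k | ∃ M : Finset (Sym2 (Fin n)), ↑M ⊆ G.edgeSet ∧
      (∀ e ∈ M, ∀ f ∈ M, e ≠ f → ∀ v : Fin n, ¬(v ∈ e ∧ v ∈ f)) ∧ M.card = k} :=
    ⟨∅, by simp, by simp, by simp⟩
  refine csSup_le ⟨0, h0⟩ ?_
  rintro k ⟨M, hMe, hdisj, rfl⟩
  have key := count_eigs (hA := (G.posSemidef_lapMatrix (R := ℝ)).isHermitian) 2 (TM M)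
    (TM_inj G M hMe hdisj) (fun y => TM_rayleigh G M hMe hdisj y)
  rw [Fintype.card_coe] at key
  refine le_trans key ?_
  rw [mCount]
  refine Finset.card_le_card ?_
  intro i hi
  simp only [Finset.mem_filter] at hi ⊢
  refine ⟨hi.1, ?_, lapEig_le_card G i⟩
  exact hi.2
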